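/- Let G be a graph, Z ⊆ V(G), and suppose that N_G(v) ⊆ Z for every v ∈ Z and that every (k−1)-separation of G is Z-bad. Then the graph G − Z is k-connected (provided G − Z has more than k vertices). -/

import Mathlib

open SimpleGraph

/-- `{A, B}` is a separation of the graph `G` restricted to vertex set `W`:
`A ∪ B = W`, there is no edge between `A − B` and `B − A`, and both fragments
`A − B` and `B − A` are nonempty. -/
def IsSepOn {V : Type*} (G : SimpleGraph V) (W A B : Set V) : Prop :=
  A ∪ B = W ∧ (∀ a ∈ A \ B, ∀ b ∈ B \ A, ¬ G.Adj a b) ∧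
    (A \ B).Nonempty ∧ (B \ A).Nonempty

/-- `{A, B}` is a separation of `G`. -/
def IsSeparation {V : Type*} (G : SimpleGraph V) (A B : Set V) : Prop :=
  IsSepOn G Set.univ A B

/-- `{A, B}` is `Z`-good: `{A − Z, B − Z}` is a separation of `G − Z`. -/
def ZGood {V : Type*} (G : SimpleGraph V) (Z A B : Set V) : Prop :=
  IsSepOn G Zᶜ (A \ Z) (B \ Z)

/-- `G` is `k`-connected: more than `k` vertices, and deleting fewer than `k`
vertices leaves a connected graph. -/
def KConnected {V : Type*} (k : ℕ) (G : SimpleGraph V) : Prop :=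
  k < (Set.univ : Set V).ncard ∧
    ∀ X : Set V, X.ncard < k → (G.induce Xᶜ).Connected

/-- The graph `G / vw` obtained from `G` by contracting the edge `vw`:
the vertex `w` is removed and identified with `v`. -/
def contract {V : Type*} (G : SimpleGraph V) (v w : V) :
    SimpleGraph {x : V // x ≠ w} where
  Adj x y := x ≠ y ∧
    (G.Adj x y ∨ ((x : V) = v ∧ G.Adj w y) ∨ ((y : V) = v ∧ G.Adj w x))
  symm := by
    refine ⟨?_⟩
    rintro x y ⟨hxy, h⟩
    refine ⟨hxy.symm, ?_⟩
    rcases h with h | ⟨h1, h2⟩ | ⟨h1, h2⟩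
    · exact Or.inl h.symm
    · exact Or.inr (Or.inr ⟨h1, h2⟩)
    · exact Or.inr (Or.inl ⟨h1, h2⟩)
  loopless := by refine ⟨?_⟩; rintro x ⟨h, -⟩; exact h rfl

/-- The graph obtained from `G` by contracting the set `F` of edges:
its vertices are the connected components of the spanning subgraph with
edge set `F`, with components adjacent if `G` has an edge between them. -/
def contractEdges {V : Type*} (G : SimpleGraph V) (F : Set (Sym2 V)) :
    SimpleGraph (SimpleGraph.fromEdgeSet F).ConnectedComponent where
  Adj c d := c ≠ d ∧ ∃ x y, G.Adj x y ∧
    (SimpleGraph.fromEdgeSet F).connectedComponentMk x = c ∧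
    (SimpleGraph.fromEdgeSet F).connectedComponentMk y = d
  symm := by
    refine ⟨?_⟩
    rintro c d ⟨hcd, x, y, hxy, hx, hy⟩
    exact ⟨hcd.symm, y, x, hxy.symm, hy, hx⟩
  loopless := by refine ⟨?_⟩; rintro c ⟨h, -⟩; exact h rfl

/-- `G` has a `K_t`-minor: there are `t` pairwise disjoint nonempty connected
vertex sets (branch sets) with an edge between each pair. -/
def HasCliqueMinor {V : Type*} (G : SimpleGraph V) (t : ℕ) : Prop :=
  ∃ f : Fin t → Set V,
    (∀ i, (G.induce (f i)).Connected) ∧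
    (∀ i j, i ≠ j → Disjoint (f i) (f j)) ∧
    (∀ i j, i ≠ j → ∃ a ∈ f i, ∃ b ∈ f j, G.Adj a b)
/-- If `N_G(v) ⊆ Z` for every `v ∈ Z` and every `(k−1)`-separation of `G` is
`Z`-bad, then `G − Z` is `k`-connected (provided it has more than `k`
vertices). -/
theorem stmt13 {V : Type*} [Fintype V] (G : SimpleGraph V) (k : ℕ)
    (Z : Set V) (hZnbr : ∀ v ∈ Z, G.neighborSet v ⊆ Z)
    (hbad : ∀ A B : Set V, IsSeparation G A B → (A ∩ B).ncard ≤ k - 1 →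
      (A \ B ⊆ Z ∨ B \ A ⊆ Z))
    (hcard : k < (Zᶜ : Set V).ncard) :
    KConnected k (G.induce Zᶜ) := by
  constructor
  · rwa [Set.ncard_univ, Nat.card_coe_set_eq]
  intro X hX
  have hk1 : 1 ≤ k := by omega
  set X' : Set V := Subtype.val '' X with hX'def
  have hX'z : X' ⊆ Zᶜ := by rintro w ⟨y, -, rfl⟩; exact y.2
  have hX'card : X'.ncard = X.ncard :=
    Set.ncard_image_of_injective _ Subtype.val_injective
  have hXc : (Xᶜ : Set ↥(Zᶜ : Set V)).Nonempty := by
    by_contra h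
    rw [Set.not_nonempty_iff_eq_empty, Set.compl_empty_iff] at h
    rw [h, Set.ncard_univ, Nat.card_coe_set_eq] at hX
    omega
  haveI hne : Nonempty ↥(Xᶜ : Set ↥(Zᶜ : Set V)) := hXc.to_subtype
  constructor
  · intro u v
    by_contra hr
    set H := (G.induce (Zᶜ : Set V)).induce Xᶜ with hH
    set C : Set V := {w | ∃ (hw : w ∈ (Zᶜ : Set V))
        (hw2 : (⟨w, hw⟩ : ↥(Zᶜ : Set V)) ∈ Xᶜ),
        H.Reachable u ⟨⟨w, hw⟩, hw2⟩} with hC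
    have hCz : C ⊆ Zᶜ := by rintro w ⟨hw, -, -⟩; exact hw
    have hCX : ∀ w ∈ C, w ∉ X' := by
      rintro w ⟨hw, hw2, -⟩ ⟨y, hy, rfl⟩
      exact hw2 (by simpa using hy)
    have huC : (u : V) ∈ C := ⟨u.1.2, u.2, Reachable.refl u⟩
    have hvC : (v : V) ∉ C := by
      rintro ⟨hw, hw2, hreach⟩
      exact hr hreach
    set A : Set V := C ∪ Z ∪ X' with hA
    set B : Set V := Zᶜ \ C with hB
    have hsep : IsSeparation G A B := by
      refine ⟨?_, ?_, ?_, ?_⟩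
      · apply Set.eq_univ_of_forall
        intro w
        by_cases hwZ : w ∈ Z
        · exact Or.inl (Or.inl (Or.inr hwZ))
        · by_cases hwC : w ∈ C
          · exact Or.inl (Or.inl (Or.inl hwC))
          · exact Or.inr ⟨hwZ, hwC⟩
      · rintro a ⟨haA, haB⟩ b ⟨⟨hbZ, hbC⟩, hbA⟩ hadj
        have hbZ' : b ∉ Z := hbZ
        have hbX : b ∉ X' := fun h => hbA (Or.inr h)
        have haC : a ∈ C ∨ a ∈ Z := by
          rcases haA with (h | h) | h
          · exact Or.inl h
          · exact Or.inr h
          · -- a ∈ X' : then a ∈ Zᶜ, and a ∉ B means a ∈ C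
            left
            by_contra haC
            exact haB ⟨hX'z h, haC⟩
        rcases haC with haC | haZ
        · -- a ∈ C, b adjacent, b ∈ Zᶜ \ X' : so b ∈ C, contradiction
          obtain ⟨ha1, ha2, hreach⟩ := haC
          have hb2 : (⟨b, hbZ⟩ : ↥(Zᶜ : Set V)) ∈ Xᶜ := by
            intro hmem
            exact hbX ⟨⟨b, hbZ⟩, hmem, rfl⟩
          have hadjH : H.Adj ⟨⟨a, ha1⟩, ha2⟩ ⟨⟨b, hbZ⟩, hb2⟩ := hadj
          exact hbC ⟨hbZ, hb2, hreach.trans hadjH.reachable⟩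
        · exact hbZ' (hZnbr a haZ hadj)
      · refine ⟨(u : V), Or.inl (Or.inl huC), ?_⟩
        rintro ⟨-, hnc⟩
        exact hnc huC
      · refine ⟨(v : V), ⟨v.1.2, hvC⟩, ?_⟩
        rintro ((h | h) | h)
        · exact hvC h
        · exact v.1.2 h
        · obtain ⟨y, hy, hyv⟩ := h
          have hyv' : y = v.1 := Subtype.val_injective hyv
          exact v.2 (hyv' ▸ hy)
    have hAB : A ∩ B = X' := by
      ext w
      constructor
      · rintro ⟨haA, hwZ, hwC⟩
        rcases haA with (h | h) | h
        · exact absurd h hwC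
        · exact absurd h hwZ
        · exact h
      · intro h
        refine ⟨Or.inr h, hX'z h, ?_⟩
        intro hc
        exact hCX _ hc h
    have hcard' : (A ∩ B).ncard ≤ k - 1 := by
      rw [hAB, hX'card]; omega
    rcases hbad A B hsep hcard' with h | h
    · have : (u : V) ∈ A \ B := ⟨Or.inl (Or.inl huC), fun hb => hb.2 huC⟩
      exact u.1.2 (h this)
    · have : (v : V) ∈ B \ A := by
        refine ⟨⟨v.1.2, hvC⟩, ?_⟩
        rintro ((hc | hz) | hx)
        · exact hvC hc
        · exact v.1.2 hz
        · obtain ⟨y, hy, hyv⟩ := hx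
          have : y = v.1 := Subtype.val_injective hyv
          exact v.2 (this ▸ hy)
      exact v.1.2 (h this)
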